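/- Let d ≥ 2, let P be a d×d symmetric positive definite matrix with eigenvalues σ_1 ≥ ⋯ ≥ σ_d > 0 and orthonormal eigenvectors u_1,…,u_d, let g be a nonzero vector in span{u_1, u_2}, g̃ = g/√(gᵀPg), and P' = (d²/(d²−1))(P − (2/(d+1)) P g̃ g̃ᵀ P). Let σ'_1 ≥ σ'_2 be the two eigenvalues of P' other than {(d²/(d²−1))σ_i : 3 ≤ i ≤ d}. Then (σ'_1 σ'_2)/(σ_1 σ_2) = d⁴/((d+1)³(d−1)) < 1, and moreover (d²/(d+1)²) σ_1 ≤ σ'_1 ≤ (d²/(d²−1)) σ_1 and (d²/(d+1)²) σ_2 ≤ σ'_2 ≤ (d²/(d²−1)) σ_2. -/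

import Mathlib

open Matrix

set_option maxHeartbeats 4000000

private lemma d4_lt_one (x : ℝ) (hx : 2 ≤ x) : x^4 / ((x+1)^3*(x-1)) < 1 := by
  have h1 : (0:ℝ) < x + 1 := by linarith
  have h2 : (0:ℝ) < x - 1 := by linarith
  have hx0 : (0:ℝ) ≤ x := by linarith
  have h4 : 2*x ≤ x^2 := by nlinarith [mul_nonneg hx0 (by linarith : (0:ℝ) ≤ x - 2)]
  have h5 : 2*x^2 ≤ x^3 := by nlinarith [mul_le_mul_of_nonneg_left h4 hx0]
  rw [div_lt_one (by positivity)]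
  nlinarith [h4, h5]

private lemma vmv_mulVec (n : ℕ) (a b v : Fin n → ℝ) :
    Matrix.vecMulVec a b *ᵥ v = (b ⬝ᵥ v) • a := by
  funext i
  simp only [Matrix.vecMulVec_apply, Matrix.mulVec, dotProduct, Pi.smul_apply,
    smul_eq_mul, Finset.sum_mul]
  exact Finset.sum_congr rfl (fun x _ => by ring)

private lemma sum_mulVec' (n : ℕ) (M : Fin n → Matrix (Fin n) (Fin n) ℝ) (v : Fin n → ℝ) :
    (∑ i, M i) *ᵥ v = ∑ i, (M i *ᵥ v) := by
  funext j
  simp only [Matrix.mulVec, dotProduct, Finset.sum_apply, Matrix.sum_apply,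
    Finset.sum_mul]
  rw [Finset.sum_comm]


lemma core_lemma (c β s1 s2 a b si a1 b1 t p1 p2 : ℝ)
    (hc : 0 < c) (hβ0 : 0 < β) (hβ1 : β < 1)
    (hs2 : 0 < s2) (h12 : s2 ≤ s1)
    (hsi : si * (a^2*s1 + b^2*s2) = 1)
    (hn1 : a1 ≠ 0 ∨ b1 ≠ 0)
    (ht : t ≠ 0)
    (e1 : c*(s1*a1 - β*si*(a*s1*a1 + b*s2*b1)*s1*a) = p1*a1)
    (e2 : c*(s2*b1 - β*si*(a*s1*a1 + b*s2*b1)*s2*b) = p1*b1)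
    (e3 : c*(s1*(-t*b1) - β*si*(a*s1*(-t*b1) + b*s2*(t*a1))*s1*a) = p2*(-t*b1))
    (e4 : c*(s2*(t*a1) - β*si*(a*s1*(-t*b1) + b*s2*(t*a1))*s2*b) = p2*(t*a1))
    (hord : p2 ≤ p1) :
    p1*p2 = c^2*(1-β)*s1*s2 ∧ c*(1-β)*s1 ≤ p1 ∧ p1 ≤ c*s1 ∧
      c*(1-β)*s2 ≤ p2 ∧ p2 ≤ c*s2 := by
  have hs1 : 0 < s1 := lt_of_lt_of_le hs2 h12
  have hn : 0 < a1^2 + b1^2 := by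
    rcases hn1 with h | h
    · have : 0 < a1^2 := by positivity
      nlinarith [sq_nonneg b1]
    · have : 0 < b1^2 := by positivity
      nlinarith [sq_nonneg a1]
  have hS0 : 0 ≤ a^2*s1 + b^2*s2 := by positivity
  have hS : 0 < a^2*s1 + b^2*s2 := by
    rcases hS0.lt_or_eq with h | h
    · exact h
    · exfalso; rw [← h] at hsi; simp at hsi
  have hsip : 0 < si := by nlinarith
  have e3' : c*(s1*b1 + β*si*(-(a*s1*b1) + b*s2*a1)*s1*a) = p2*b1 := by
    apply mul_left_cancel₀ ht
    linear_combination -e3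
  have e4' : c*(s2*a1 - β*si*(-(a*s1*b1) + b*s2*a1)*s2*b) = p2*a1 := by
    apply mul_left_cancel₀ ht
    linear_combination e4
  have R1 : p1*(a1^2+b1^2)
      = c*(s1*a1^2+s2*b1^2) - c*β*si*(a*s1*a1+b*s2*b1)^2 := by
    linear_combination (-a1)*e1 - b1*e2
  have R2 : p2*(a1^2+b1^2)
      = c*(s1*b1^2+s2*a1^2) - c*β*si*(a*s1*b1-b*s2*a1)^2 := by
    linear_combination (-b1)*e3' - a1*e4'
  have T1 : (c*s1 - c*β*si*a^2*s1^2)*(a1^2+b1^2) = p1*a1^2 + p2*b1^2 := by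
    linear_combination a1*e1 + b1*e3'
  have T2 : (c*s2 - c*β*si*b^2*s2^2)*(a1^2+b1^2) = p1*b1^2 + p2*a1^2 := by
    linear_combination b1*e2 + a1*e4'
  have trace : (c*s1 - c*β*si*a^2*s1^2) + (c*s2 - c*β*si*b^2*s2^2) = p1 + p2 := by
    apply mul_right_cancel₀ (ne_of_gt hn)
    linear_combination T1 + T2
  set m11 := c*s1 - c*β*si*a^2*s1^2 with hm11
  set m22 := c*s2 - c*β*si*b^2*s2^2 with hm22
  set m12 := -(c*β*si*a*b*s1*s2) with hm12
  have h1 : ((m11-p1)*(m22-p1) - m12^2)*a1 = 0 := by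
    rw [hm11, hm22, hm12]
    linear_combination (c*s2 - c*β*si*b^2*s2^2 - p1)*e1 + (c*β*si*a*b*s1*s2)*e2
  have h2 : ((m11-p1)*(m22-p1) - m12^2)*b1 = 0 := by
    rw [hm11, hm22, hm12]
    linear_combination (c*β*si*a*b*s1*s2)*e1 + (c*s1 - c*β*si*a^2*s1^2 - p1)*e2
  have hD : (m11-p1)*(m22-p1) - m12^2 = 0 := by
    have hD2 : ((m11-p1)*(m22-p1) - m12^2)^2 * (a1^2+b1^2) = 0 := by
      linear_combination (((m11-p1)*(m22-p1) - m12^2)*a1)*h1 + (((m11-p1)*(m22-p1) - m12^2)*b1)*h2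
    rcases mul_eq_zero.mp hD2 with h | h
    · exact pow_eq_zero_iff (by norm_num) |>.mp h
    · exact absurd h (ne_of_gt hn)
  have hmm : m11*m22 - m12^2 = c^2*(1-β)*s1*s2 := by
    rw [hm11, hm22, hm12]
    linear_combination (-(c^2*s1*s2*β))*hsi
  have product : p1*p2 = c^2*(1-β)*s1*s2 := by
    linear_combination -hD - p1*trace + hmm
  refine ⟨product, ?_, ?_, ?_, ?_⟩
  · -- c*(1-β)*s1 ≤ p1 : via m11
    have hb2 : si*b^2*s2 = 1 - si*a^2*s1 := by linear_combination hsi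
    have h2' : 0 ≤ 1 - si*a^2*s1 := by rw [← hb2]; positivity
    have hm11lb : c*(1-β)*s1 ≤ m11 := by
      rw [hm11]
      have key : c*s1 - c*β*si*a^2*s1^2 - c*(1-β)*s1 = (c*β*s1)*(1 - si*a^2*s1) := by ring
      have hp := mul_nonneg (mul_nonneg (mul_nonneg hc.le hβ0.le) hs1.le) h2'
      linarith [key, hp]
    have hp1m : m11 ≤ p1 := by
      have h := mul_nonneg (sub_nonneg.mpr hord) (sq_nonneg b1)
      have : m11*(a1^2+b1^2) ≤ p1*(a1^2+b1^2) := by linarith [T1, h]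
      exact le_of_mul_le_mul_right this hn
    linarith
  · -- p1 ≤ c*s1
    have hA := mul_nonneg (mul_nonneg (mul_nonneg hc.le hβ0.le) hsip.le)
      (sq_nonneg (a*s1*a1+b*s2*b1))
    have hB := mul_nonneg (mul_nonneg hc.le (sub_nonneg.mpr h12)) (sq_nonneg b1)
    have : p1*(a1^2+b1^2) ≤ c*s1*(a1^2+b1^2) := by linarith [R1, hA, hB]
    exact le_of_mul_le_mul_right this hn
  · -- c*(1-β)*s2 ≤ p2
    have hls : si*(a*s1*b1-b*s2*a1)^2*(a^2*s1+b^2*s2) = (a*s1*b1-b*s2*a1)^2 := by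
      linear_combination ((a*s1*b1-b*s2*a1)^2)*hsi
    have expand : (a^2*s1+b^2*s2)*(s1*b1^2+s2*a1^2) - (a*s1*b1-b*s2*a1)^2
        = s1*s2*(a*a1+b*b1)^2 := by ring
    have hpos2 : 0 ≤ s1*s2*(a*a1+b*b1)^2 := by positivity
    have cs : si*(a*s1*b1-b*s2*a1)^2 ≤ s1*b1^2+s2*a1^2 := by
      rw [← mul_le_mul_iff_of_pos_right hS]
      linarith [hls, expand, hpos2]
    have hcs' := mul_le_mul_of_nonneg_left cs (mul_pos hc hβ0).le
    have hB := mul_nonneg (mul_nonneg (mul_nonneg hc.le (by linarith : (0:ℝ) ≤ 1-β))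
      (sub_nonneg.mpr h12)) (sq_nonneg b1)
    have : c*(1-β)*s2*(a1^2+b1^2) ≤ p2*(a1^2+b1^2) := by linarith [R2, hcs', hB]
    exact le_of_mul_le_mul_right this hn
  · -- p2 ≤ c*s2 : via m22
    have hp2m : p2 ≤ m22 := by
      have h := mul_nonneg (sub_nonneg.mpr hord) (sq_nonneg b1)
      have : p2*(a1^2+b1^2) ≤ m22*(a1^2+b1^2) := by linarith [T2, h]
      exact le_of_mul_le_mul_right this hn
    have hub : m22 ≤ c*s2 := by
      rw [hm22]
      have : 0 ≤ c*β*si*b^2*s2^2 := by positivity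
      linarith
    linarith




/-- The two remaining eigenvalues `σ'₁ ≥ σ'₂` of the central-cut update `P'`
(those with eigenvectors in `span{u 0, u 1}`) satisfy the stated product
identity and bounds. -/
theorem stmt4 (d : ℕ) (hd : 2 ≤ d)
    (P : Matrix (Fin d) (Fin d) ℝ)
    (σ : Fin d → ℝ) (u : Fin d → Fin d → ℝ)
    (horth : ∀ i j, u i ⬝ᵥ u j = if i = j then (1 : ℝ) else 0)
    (hdecr : ∀ i j : Fin d, i ≤ j → σ j ≤ σ i)
    (hpos : ∀ i, 0 < σ i)
    (hP : P = ∑ i, σ i • vecMulVec (u i) (u i))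
    (g : Fin d → ℝ) (hg : g ≠ 0)
    (hspan : ∃ a b : ℝ, g = a • u ⟨0, by omega⟩ + b • u ⟨1, by omega⟩)
    (gt : Fin d → ℝ) (hgt : gt = (Real.sqrt (g ⬝ᵥ (P *ᵥ g)))⁻¹ • g)
    (P' : Matrix (Fin d) (Fin d) ℝ)
    (hP' : P' = ((d : ℝ)^2 / ((d : ℝ)^2 - 1)) •
      (P - (2 / ((d : ℝ) + 1)) • (P * vecMulVec gt gt * P)))
    (σ'₁ σ'₂ : ℝ) (v₁ v₂ : Fin d → ℝ)
    (hv₁ : v₁ ≠ 0) (hv₂ : v₂ ≠ 0)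
    (hv₁span : ∃ a b : ℝ, v₁ = a • u ⟨0, by omega⟩ + b • u ⟨1, by omega⟩)
    (hv₂span : ∃ a b : ℝ, v₂ = a • u ⟨0, by omega⟩ + b • u ⟨1, by omega⟩)
    (hvorth : v₁ ⬝ᵥ v₂ = 0)
    (heig₁ : P' *ᵥ v₁ = σ'₁ • v₁) (heig₂ : P' *ᵥ v₂ = σ'₂ • v₂)
    (hord : σ'₂ ≤ σ'₁) :
    σ'₁ * σ'₂ / (σ ⟨0, by omega⟩ * σ ⟨1, by omega⟩)
        = (d : ℝ)^4 / (((d : ℝ) + 1)^3 * ((d : ℝ) - 1)) ∧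
    (d : ℝ)^4 / (((d : ℝ) + 1)^3 * ((d : ℝ) - 1)) < 1 ∧
    ((d : ℝ)^2 / ((d : ℝ) + 1)^2) * σ ⟨0, by omega⟩ ≤ σ'₁ ∧
    σ'₁ ≤ ((d : ℝ)^2 / ((d : ℝ)^2 - 1)) * σ ⟨0, by omega⟩ ∧
    ((d : ℝ)^2 / ((d : ℝ) + 1)^2) * σ ⟨1, by omega⟩ ≤ σ'₂ ∧
    σ'₂ ≤ ((d : ℝ)^2 / ((d : ℝ)^2 - 1)) * σ ⟨1, by omega⟩ := by
  set i0 : Fin d := ⟨0, by omega⟩ with hi0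
  set i1 : Fin d := ⟨1, by omega⟩ with hi1
  have hne : i0 ≠ i1 := by simp [hi0, hi1, Fin.ext_iff]
  have h00 : u i0 ⬝ᵥ u i0 = 1 := by rw [horth]; simp
  have h01 : u i0 ⬝ᵥ u i1 = 0 := by rw [horth]; simp [hne]
  have h10 : u i1 ⬝ᵥ u i0 = 0 := by rw [horth]; simp [Ne.symm hne]
  have h11 : u i1 ⬝ᵥ u i1 = 1 := by rw [horth]; simp
  have hPw : ∀ x y : ℝ, P *ᵥ (x • u i0 + y • u i1)
      = (σ i0 * x) • u i0 + (σ i1 * y) • u i1 := by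
    intro x y
    rw [hP, sum_mulVec']
    have key : ∀ i : Fin d, (σ i • vecMulVec (u i) (u i)) *ᵥ (x • u i0 + y • u i1)
        = (if i = i0 then (σ i0 * x) • u i0 else 0)
          + (if i = i1 then (σ i1 * y) • u i1 else 0) := by
      intro i
      rw [smul_mulVec, vmv_mulVec]
      rw [dotProduct_add, dotProduct_smul, dotProduct_smul, horth, horth]
      by_cases h0 : i = i0
      · subst h0
        simp [hne, if_neg hne]
        module
      · by_cases h1 : i = i1
        · subst h1
          simp [h0]
          module
        · simp [h0, h1]
    rw [Finset.sum_congr rfl (fun i _ => key i), Finset.sum_add_distrib,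
      Finset.sum_ite_eq' Finset.univ i0, Finset.sum_ite_eq' Finset.univ i1]
    simp
  have du0 : ∀ p q : ℝ, u i0 ⬝ᵥ (p • u i0 + q • u i1) = p := by
    intro p q
    rw [dotProduct_add, dotProduct_smul, dotProduct_smul, h00, h01]; simp
  have du1 : ∀ p q : ℝ, u i1 ⬝ᵥ (p • u i0 + q • u i1) = q := by
    intro p q
    rw [dotProduct_add, dotProduct_smul, dotProduct_smul, h10, h11]; simp
  obtain ⟨a, b, hgab⟩ := hspan
  obtain ⟨a1, b1, hv1e⟩ := hv₁span
  obtain ⟨a2, b2, hv2e⟩ := hv₂span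
  have hσ0 : 0 < σ i0 := hpos i0
  have hσ1 : 0 < σ i1 := hpos i1
  have hσ01 : σ i1 ≤ σ i0 := hdecr i0 i1 (by simp [hi0, hi1, Fin.le_def])
  -- g coordinates are not both zero
  have habne : a ≠ 0 ∨ b ≠ 0 := by
    by_contra h
    push_neg at h
    exact hg (by rw [hgab, h.1, h.2]; simp)
  have hS : 0 < a^2 * σ i0 + b^2 * σ i1 := by
    rcases habne with h | h
    · have h1 : 0 < a^2 * σ i0 := mul_pos (by positivity) hσ0
      have h2 : 0 ≤ b^2 * σ i1 := mul_nonneg (sq_nonneg b) hσ1.le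
      linarith
    · have h1 : 0 < b^2 * σ i1 := mul_pos (by positivity) hσ1
      have h2 : 0 ≤ a^2 * σ i0 := mul_nonneg (sq_nonneg a) hσ0.le
      linarith
  have hsval : g ⬝ᵥ (P *ᵥ g) = a^2 * σ i0 + b^2 * σ i1 := by
    rw [hgab, hPw a b]
    simp only [add_dotProduct, smul_dotProduct, smul_eq_mul, du0, du1]
    ring
  set t' : ℝ := (Real.sqrt (a^2 * σ i0 + b^2 * σ i1))⁻¹ with ht'
  have hgtval : gt = t' • g := by rw [hgt, hsval]
  have hsi : (t' * t') * (a^2 * σ i0 + b^2 * σ i1) = 1 := by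
    rw [ht', ← mul_inv, Real.mul_self_sqrt hS.le]
    exact inv_mul_cancel₀ (ne_of_gt hS)
  -- coordinate formula for P' *ᵥ
  set c : ℝ := (d : ℝ)^2 / ((d : ℝ)^2 - 1) with hcdef
  set β : ℝ := 2 / ((d : ℝ) + 1) with hβdef
  have hP'w : ∀ x y : ℝ, P' *ᵥ (x • u i0 + y • u i1)
      = (c*(σ i0 * x - β*(t'*t')*(a*(σ i0)*x + b*(σ i1)*y)*(σ i0)*a)) • u i0
        + (c*(σ i1 * y - β*(t'*t')*(a*(σ i0)*x + b*(σ i1)*y)*(σ i1)*b)) • u i1 := by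
    intro x y
    have step2 : vecMulVec gt gt *ᵥ ((σ i0 * x) • u i0 + (σ i1 * y) • u i1)
        = (t'*(a*(σ i0 * x) + b*(σ i1 * y))) • gt := by
      rw [vmv_mulVec]
      congr 1
      rw [hgtval, hgab]
      simp only [smul_dotProduct, add_dotProduct, smul_eq_mul, du0, du1]
      try ring
    have step3 : P *ᵥ ((t'*(a*(σ i0 * x) + b*(σ i1 * y))) • gt)
        = (t'*(a*(σ i0 * x) + b*(σ i1 * y))) • (t' • ((σ i0 * a) • u i0 + (σ i1 * b) • u i1)) := by
      rw [mulVec_smul, hgtval, mulVec_smul, hgab, hPw a b]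
    calc P' *ᵥ (x • u i0 + y • u i1)
        = c • (P *ᵥ (x • u i0 + y • u i1)
            - β • ((P * vecMulVec gt gt * P) *ᵥ (x • u i0 + y • u i1))) := by
          rw [hP', smul_mulVec, sub_mulVec, smul_mulVec]
      _ = c • ((((σ i0 * x) • u i0 + (σ i1 * y) • u i1))
            - β • ((t'*(a*(σ i0 * x) + b*(σ i1 * y)))
                • (t' • ((σ i0 * a) • u i0 + (σ i1 * b) • u i1)))) := by
          rw [← mulVec_mulVec, ← mulVec_mulVec, hPw x y, step2, step3]
      _ = _ := by match_scalars <;> ring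
  -- scalar eigen-equations
  rw [hv1e, hP'w a1 b1, smul_add, smul_smul, smul_smul] at heig₁
  rw [hv2e, hP'w a2 b2, smul_add, smul_smul, smul_smul] at heig₂
  have e1 : c*(σ i0 * a1 - β*(t'*t')*(a*(σ i0)*a1 + b*(σ i1)*b1)*(σ i0)*a) = σ'₁ * a1 := by
    have h := congrArg (fun w => u i0 ⬝ᵥ w) heig₁
    simpa [du0] using h
  have e2 : c*(σ i1 * b1 - β*(t'*t')*(a*(σ i0)*a1 + b*(σ i1)*b1)*(σ i1)*b) = σ'₁ * b1 := by
    have h := congrArg (fun w => u i1 ⬝ᵥ w) heig₁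
    simpa [du1] using h
  have e3o : c*(σ i0 * a2 - β*(t'*t')*(a*(σ i0)*a2 + b*(σ i1)*b2)*(σ i0)*a) = σ'₂ * a2 := by
    have h := congrArg (fun w => u i0 ⬝ᵥ w) heig₂
    simpa [du0] using h
  have e4o : c*(σ i1 * b2 - β*(t'*t')*(a*(σ i0)*a2 + b*(σ i1)*b2)*(σ i1)*b) = σ'₂ * b2 := by
    have h := congrArg (fun w => u i1 ⬝ᵥ w) heig₂
    simpa [du1] using h
  -- orthogonality and nondegeneracy in coordinates
  have ho : a1*a2 + b1*b2 = 0 := by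
    rw [hv1e, hv2e] at hvorth
    rw [add_dotProduct, smul_dotProduct, smul_dotProduct, du0, du1] at hvorth
    simp only [smul_eq_mul] at hvorth
    linear_combination hvorth
  have hn1 : a1 ≠ 0 ∨ b1 ≠ 0 := by
    by_contra h
    push_neg at h
    exact hv₁ (by rw [hv1e, h.1, h.2]; simp)
  have hn2 : a2 ≠ 0 ∨ b2 ≠ 0 := by
    by_contra h
    push_neg at h
    exact hv₂ (by rw [hv2e, h.1, h.2]; simp)
  have hn1pos : 0 < a1^2 + b1^2 := by
    rcases hn1 with h | h
    · have : 0 < a1^2 := by positivity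
      linarith [sq_nonneg b1]
    · have : 0 < b1^2 := by positivity
      linarith [sq_nonneg a1]
  have hn2pos : 0 < a2^2 + b2^2 := by
    rcases hn2 with h | h
    · have : 0 < a2^2 := by positivity
      linarith [sq_nonneg b2]
    · have : 0 < b2^2 := by positivity
      linarith [sq_nonneg a2]
  have hdetsq : 0 < (a1*b2 - a2*b1)^2 := by
    have key : (a1*b2 - a2*b1)^2
        = (a1^2+b1^2)*(a2^2+b2^2) - (a1*a2 + b1*b2)^2 := by ring
    rw [key, ho]
    simpa using mul_pos hn1pos hn2pos
  have hdet : a1*b2 - a2*b1 ≠ 0 := by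
    intro h
    rw [h] at hdetsq
    simp at hdetsq
  have ht : (a1*b2 - a2*b1)/(a1^2+b1^2) ≠ 0 := div_ne_zero hdet (ne_of_gt hn1pos)
  have ha2 : a2 = -((a1*b2 - a2*b1)/(a1^2+b1^2))*b1 := by
    have hrw : -((a1*b2 - a2*b1)/(a1^2+b1^2))*b1
        = (-((a1*b2 - a2*b1)*b1))/(a1^2+b1^2) := by ring
    rw [hrw, eq_div_iff (ne_of_gt hn1pos)]
    linear_combination a1*ho
  have hb2 : b2 = ((a1*b2 - a2*b1)/(a1^2+b1^2))*a1 := by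
    have hrw : ((a1*b2 - a2*b1)/(a1^2+b1^2))*a1
        = ((a1*b2 - a2*b1)*a1)/(a1^2+b1^2) := by ring
    rw [hrw, eq_div_iff (ne_of_gt hn1pos)]
    linear_combination b1*ho
  set T : ℝ := (a1*b2 - a2*b1)/(a1^2+b1^2) with hT
  have e3 : c*(σ i0 * (-T*b1) - β*(t'*t')*(a*(σ i0)*(-T*b1) + b*(σ i1)*(T*a1))*(σ i0)*a)
      = σ'₂ * (-T*b1) := by
    rw [← ha2, ← hb2]; exact e3o
  have e4 : c*(σ i1 * (T*a1) - β*(t'*t')*(a*(σ i0)*(-T*b1) + b*(σ i1)*(T*a1))*(σ i1)*b)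
      = σ'₂ * (T*a1) := by
    rw [← ha2, ← hb2]; exact e4o
  -- sanity facts about d
  have hd2 : (2:ℝ) ≤ (d:ℝ) := by exact_mod_cast hd
  have hdp1 : 0 < (d:ℝ) + 1 := by linarith
  have hdm1 : 0 < (d:ℝ) - 1 := by linarith
  have hd21 : 0 < (d:ℝ)^2 - 1 := by
    have key : (d:ℝ)^2 - 1 = ((d:ℝ) - 1) * ((d:ℝ) + 1) := by ring
    rw [key]; exact mul_pos hdm1 hdp1
  have hdpos : (0:ℝ) < (d:ℝ) := by linarith
  have hc : 0 < c := by rw [hcdef]; exact div_pos (pow_pos hdpos 2) hd21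
  have hβ0 : 0 < β := by rw [hβdef]; positivity
  have hβ1 : β < 1 := by rw [hβdef, div_lt_one hdp1]; linarith
  obtain ⟨F1, F2, F3, F4, F5⟩ := core_lemma c β (σ i0) (σ i1) a b (t'*t') a1 b1
    T σ'₁ σ'₂ hc hβ0 hβ1 hσ1 hσ01 hsi hn1 ht e1 e2 e3 e4 hord
  have hσ0ne : σ i0 ≠ 0 := ne_of_gt hσ0
  have hσ1ne : σ i1 ≠ 0 := ne_of_gt hσ1
  refine ⟨?_, ?_, ?_, ?_, ?_, ?_⟩
  · rw [F1, hcdef, hβdef]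
    field_simp
    ring
  · exact d4_lt_one (d:ℝ) hd2
  · have hkey : (d : ℝ)^2 / ((d : ℝ) + 1)^2 = c*(1-β) := by
      rw [hcdef, hβdef]
      field_simp
      ring
    rw [hkey]; exact F2
  · exact F3
  · have hkey : (d : ℝ)^2 / ((d : ℝ) + 1)^2 = c*(1-β) := by
      rw [hcdef, hβdef]
      field_simp
      ring
    rw [hkey]; exact F4
  · exact F5
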